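/- Let p be a prime, l ≥ 1, and suppose Δ(P_{k1},U) = μ_1/p and Δ(P_{k2},U) = μ_2/p for nonnegative reals μ_1, μ_2 with μ_1 ≤ p−(l+1) and μ_2 ≤ p−1, where k_1, k_2 are independent keys on Z_p. Then for any message b and tag t, Pr[f(b,k_1)+k_2 = t] ≤ (μ_1 + l + 1)(μ_2 + 1)/p. -/

import Mathlib

/-- `f(m, k) = k^{ν+1} + m_1 k^ν + ... + m_ν k` for a message `m` of length `ν`
over `Z_p`. -/
def macF {p : ℕ} (m : List (ZMod p)) (k : ZMod p) : ZMod p :=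
  k ^ (m.length + 1) + ∑ i : Fin m.length, m.get i * k ^ (m.length - i.val)

/-- With independent keys on `Z_p` whose distances from uniform
are `μ₁/p` and `μ₂/p`, where `0 ≤ μ₁ ≤ p − (l+1)` and `0 ≤ μ₂ ≤ p − 1`, for any
message `b` (nonempty, length `≤ l`) and tag `t`,
`Pr[f(b,k₁) + k₂ = t] ≤ (μ₁ + l + 1)(μ₂ + 1)/p`. -/
theorem stmt_10 (p : ℕ) (hp : p.Prime) [Fact p.Prime] (l : ℕ) (hl : 1 ≤ l)
    (P₁ P₂ : ZMod p → ℝ)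
    (hP₁0 : ∀ x, 0 ≤ P₁ x) (hP₁1 : (∑ x, P₁ x) = 1)
    (hP₂0 : ∀ x, 0 ≤ P₂ x) (hP₂1 : (∑ x, P₂ x) = 1)
    (μ₁ μ₂ : ℝ) (hμ₁0 : 0 ≤ μ₁) (hμ₂0 : 0 ≤ μ₂)
    (hδ₁ : (1 / 2) * ∑ x, |P₁ x - 1 / p| = μ₁ / p)
    (hδ₂ : (1 / 2) * ∑ x, |P₂ x - 1 / p| = μ₂ / p)
    (hμ₁ : μ₁ ≤ p - (l + 1)) (hμ₂ : μ₂ ≤ p - 1)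
    (b : List (ZMod p)) (hb : b ≠ []) (hbl : b.length ≤ l)
    (t : ZMod p) :
    (∑ x : ZMod p, ∑ y : ZMod p, if macF b x + y = t then P₁ x * P₂ y else 0)
      ≤ (μ₁ + l + 1) * (μ₂ + 1) / p := by
  have hp0 : (0:ℝ) < p := by exact_mod_cast hp.pos
  -- sum of deviations is zero
  have hsum0 : ∑ x : ZMod p, (P₂ x - 1 / p) = 0 := by
    rw [Finset.sum_sub_distrib, hP₂1, Finset.sum_const, Finset.card_univ, ZMod.card]
    rw [nsmul_eq_mul, mul_one_div_cancel hp0.ne', sub_self]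
  -- pointwise bound on P₂
  have hmax : ∀ y : ZMod p, P₂ y ≤ (1 + μ₂) / p := by
    intro y
    have hpos : ∑ x : ZMod p, max (P₂ x - 1 / p) 0 = μ₂ / p := by
      have habs : ∀ a : ℝ, max a 0 = (|a| + a) / 2 := by
        intro a
        rcases le_total a 0 with h | h
        · rw [max_eq_right h, abs_of_nonpos h]; ring
        · rw [max_eq_left h, abs_of_nonneg h]; ring
      calc ∑ x : ZMod p, max (P₂ x - 1 / p) 0
          = ∑ x : ZMod p, (|P₂ x - 1 / p| + (P₂ x - 1 / p)) / 2 := by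
            simp_rw [habs]
        _ = (1 / 2) * ∑ x, |P₂ x - 1 / p|
            + (1 / 2) * ∑ x : ZMod p, (P₂ x - 1 / p) := by
            rw [Finset.mul_sum, Finset.mul_sum, ← Finset.sum_add_distrib]
            exact Finset.sum_congr rfl fun x _ => by ring
        _ = μ₂ / p := by rw [hδ₂, hsum0]; ring
    have h1 : P₂ y - 1 / p ≤ μ₂ / p := by
      calc P₂ y - 1 / p ≤ max (P₂ y - 1 / p) 0 := le_max_left _ _
        _ ≤ ∑ x : ZMod p, max (P₂ x - 1 / p) 0 :=
            Finset.single_le_sum (f := fun x => max (P₂ x - 1 / (p:ℝ)) 0)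
              (fun x _ => le_max_right _ _) (Finset.mem_univ y)
        _ = μ₂ / p := hpos
    have : (1 + μ₂) / p = 1 / p + μ₂ / p := by ring
    rw [this]; linarith
  -- collapse inner sums
  have key : ∀ x : ZMod p,
      (∑ y : ZMod p, if macF b x + y = t then P₁ x * P₂ y else 0)
        ≤ P₁ x * ((1 + μ₂) / p) := by
    intro x
    have hcond : ∀ y : ZMod p, (macF b x + y = t) ↔ (y = t - macF b x) := by
      intro y; constructor
      · intro h; rw [← h]; ring
      · intro h; rw [h]; ring
    have : (∑ y : ZMod p, if macF b x + y = t then P₁ x * P₂ y else 0)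
        = P₁ x * P₂ (t - macF b x) := by
      simp_rw [hcond]
      rw [Finset.sum_ite_eq' Finset.univ (t - macF b x) (fun y => P₁ x * P₂ y)]
      simp
    rw [this]
    exact mul_le_mul_of_nonneg_left (hmax _) (hP₁0 x)
  calc (∑ x : ZMod p, ∑ y : ZMod p, if macF b x + y = t then P₁ x * P₂ y else 0)
      ≤ ∑ x : ZMod p, P₁ x * ((1 + μ₂) / p) :=
        Finset.sum_le_sum (fun x _ => key x)
    _ = (1 + μ₂) / p := by rw [← Finset.sum_mul, hP₁1, one_mul]
    _ ≤ (μ₁ + l + 1) * (μ₂ + 1) / p := by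
        have hlc : (1:ℝ) ≤ l := by exact_mod_cast hl
        have h : (1:ℝ) + μ₂ ≤ (μ₁ + l + 1) * (μ₂ + 1) := by nlinarith
        gcongr
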